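/- Let A be an n×n real symmetric positive definite matrix with smallest eigenvalue λ₁ and largest eigenvalue λₙ, and let u ∈ ℝⁿ be a nonzero vector. Let θ = (uᵀAu)/(uᵀu), θ̃ = (uᵀA²u)/(uᵀAu), and α = [uᵀA²u − uᵀu + √((uᵀA²u − uᵀu)² + 4(uᵀAu)²)]/(2uᵀAu). Then λ₁ ≤ θ ≤ α ≤ θ̃ ≤ λₙ; in particular θ − λ₁ ≤ α − λ₁ ≤ θ̃ − λ₁ and λₙ − θ̃ ≤ λₙ − α ≤ λₙ − θ. -/

import Mathlib

open Matrix

set_option maxHeartbeats 2000000 in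
/-- For an SPD matrix `A` with smallest eigenvalue `λ₁` and largest eigenvalue
`λₙ`, and a nonzero vector `u`, the Rayleigh quotient `θ`, the homogeneous Rayleigh quotient
`α`, and the harmonic Rayleigh quotient `θ̃` satisfy `λ₁ ≤ θ ≤ α ≤ θ̃ ≤ λₙ`; in particular
`θ − λ₁ ≤ α − λ₁ ≤ θ̃ − λ₁` and `λₙ − θ̃ ≤ λₙ − α ≤ λₙ − θ`. -/
theorem homogeneous_rq_spd_ordering
    {n : ℕ} (A : Matrix (Fin n) (Fin n) ℝ) (hA : A.PosDef)
    (lam1 lamn : ℝ)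
    (hlam1 : ∃ v : Fin n → ℝ, v ≠ 0 ∧ A.mulVec v = lam1 • v)
    (hlamn : ∃ v : Fin n → ℝ, v ≠ 0 ∧ A.mulVec v = lamn • v)
    (hlam1min : ∀ (ν : ℝ) (v : Fin n → ℝ), v ≠ 0 → A.mulVec v = ν • v → lam1 ≤ ν)
    (hlamnmax : ∀ (ν : ℝ) (v : Fin n → ℝ), v ≠ 0 → A.mulVec v = ν • v → ν ≤ lamn)
    (u : Fin n → ℝ) (hu : u ≠ 0)
    (θ θt α : ℝ)
    (hθ : θ = (u ⬝ᵥ A.mulVec u) / (u ⬝ᵥ u))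
    (hθt : θt = (u ⬝ᵥ (A * A).mulVec u) / (u ⬝ᵥ A.mulVec u))
    (hα : α = (u ⬝ᵥ (A * A).mulVec u - u ⬝ᵥ u +
      Real.sqrt ((u ⬝ᵥ (A * A).mulVec u - u ⬝ᵥ u)^2 + 4 * (u ⬝ᵥ A.mulVec u)^2)) /
      (2 * (u ⬝ᵥ A.mulVec u))) :
    (lam1 ≤ θ ∧ θ ≤ α ∧ α ≤ θt ∧ θt ≤ lamn) ∧
    (θ - lam1 ≤ α - lam1 ∧ α - lam1 ≤ θt - lam1) ∧
    (lamn - θt ≤ lamn - α ∧ lamn - α ≤ lamn - θ) := by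
  have hH := hA.1
  set U : Matrix (Fin n) (Fin n) ℝ := (hH.eigenvectorUnitary : Matrix (Fin n) (Fin n) ℝ) with hU
  set μ : Fin n → ℝ := hH.eigenvalues with hμ
  set w : Fin n → ℝ := star U *ᵥ u with hw
  have hUU : U * star U = 1 := (Matrix.mem_unitaryGroup_iff).mp hH.eigenvectorUnitary.2
  have hUU' : star U * U = 1 := (Matrix.mem_unitaryGroup_iff').mp hH.eigenvectorUnitary.2
  have hspec : A = U * diagonal μ * star U := by
    simpa using hH.spectral_theorem
  have hquad : ∀ ν : Fin n → ℝ, u ⬝ᵥ (U * diagonal ν * star U) *ᵥ u = ∑ i, ν i * (w i)^2 := by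
    intro ν
    rw [← mulVec_mulVec, ← mulVec_mulVec, dotProduct_mulVec]
    have huw : u ᵥ* U = w := by
      rw [hw, Matrix.star_eq_conjTranspose, Matrix.conjTranspose_eq_transpose_of_trivial,
        Matrix.mulVec_transpose]
    rw [huw]
    simp only [dotProduct, Matrix.mulVec_diagonal]
    exact Finset.sum_congr rfl fun i _ => by ring
  -- the three quadratic forms as sums
  have hc : u ⬝ᵥ u = ∑ i, (w i)^2 := by
    have h1 : u ⬝ᵥ (U * diagonal (fun _ => (1:ℝ)) * star U) *ᵥ u = ∑ i, (w i)^2 := by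
      simpa using hquad (fun _ => 1)
    simpa [Matrix.diagonal_one, hUU] using h1
  have ha : u ⬝ᵥ A *ᵥ u = ∑ i, μ i * (w i)^2 := by
    conv_lhs => rw [hspec]
    exact hquad μ
  have hAA : A * A = U * diagonal (fun i => μ i * μ i) * star U := by
    rw [hspec, ← Matrix.diagonal_mul_diagonal]
    simp only [mul_assoc]
    rw [show star U * (U * (diagonal μ * star U)) = diagonal μ * star U by
      rw [← mul_assoc, hUU', one_mul]]
  have hd : u ⬝ᵥ (A * A) *ᵥ u = ∑ i, (μ i)^2 * (w i)^2 := by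
    rw [hAA, hquad]
    exact Finset.sum_congr rfl fun i _ => by ring
  -- eigenvalue bounds
  have hμbound : ∀ i, 0 < μ i ∧ lam1 ≤ μ i ∧ μ i ≤ lamn := by
    intro i
    have hv0 : (⇑(hH.eigenvectorBasis i) : Fin n → ℝ) ≠ 0 := by
      intro h
      exact hH.eigenvectorBasis.orthonormal.ne_zero i (by ext j; exact congrFun h j)
    have hev := hH.mulVec_eigenvectorBasis i
    exact ⟨hA.eigenvalues_pos i, hlam1min _ _ hv0 hev, hlamnmax _ _ hv0 hev⟩
  set a : ℝ := u ⬝ᵥ A *ᵥ u with ha'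
  set c : ℝ := u ⬝ᵥ u with hc'
  set d : ℝ := u ⬝ᵥ (A * A) *ᵥ u with hd'
  have hapos : 0 < a := by
    have := hA.dotProduct_mulVec_pos hu
    simpa using this
  have hcpos : 0 < c := by
    have hne : c ≠ 0 := fun h => hu ((dotProduct_self_eq_zero).mp h)
    have h0 : (0:ℝ) ≤ c := by rw [hc]; positivity
    exact lt_of_le_of_ne h0 (Ne.symm hne)
  have hdnn : 0 ≤ d := by rw [hd]; positivity
  -- key inequalities
  have hCS : a^2 ≤ c * d := by
    rw [ha, hc, hd]
    have := Finset.sum_mul_sq_le_sq_mul_sq Finset.univ (fun i => w i) (fun i => μ i * w i)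
    calc (∑ i, μ i * (w i)^2)^2 = (∑ i, w i * (μ i * w i))^2 := by
          congr 1; exact Finset.sum_congr rfl fun i _ => by ring
      _ ≤ (∑ i, (w i)^2) * ∑ i, (μ i * w i)^2 := this
      _ = (∑ i, (w i)^2) * ∑ i, (μ i)^2 * (w i)^2 := by
          congr 1; exact Finset.sum_congr rfl fun i _ => by ring
  have h1a : lam1 * c ≤ a := by
    rw [ha, hc, Finset.mul_sum]
    exact Finset.sum_le_sum fun i _ =>
      mul_le_mul_of_nonneg_right (hμbound i).2.1 (sq_nonneg _)
  have hdn : d ≤ lamn * a := by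
    rw [hd, ha, Finset.mul_sum]
    refine Finset.sum_le_sum fun i _ => ?_
    have h := (hμbound i).1
    have h2 := (hμbound i).2.2
    nlinarith [mul_nonneg (mul_nonneg (sub_nonneg.2 h2) h.le) (sq_nonneg (w i))]
  -- set up sqrt
  set b : ℝ := d - c with hb
  set s : ℝ := Real.sqrt (b^2 + 4 * a^2) with hs
  have hsnn : 0 ≤ s := Real.sqrt_nonneg _
  have hssq : s^2 = b^2 + 4 * a^2 := Real.sq_sqrt (by positivity)
  clear_value a c d b s
  clear hquad hspec hAA hUU hUU' hw hU hμ ha hc hd ha' hc' hd' hs hμbound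
  subst hb
  have hθa : lam1 ≤ θ := by
    rw [hθ]
    rw [le_div_iff₀ hcpos]
    linarith [h1a]
  have hθtn : θt ≤ lamn := by
    rw [hθt, div_le_iff₀ hapos]
    linarith [hdn]
  have hθα : θ ≤ α := by
    rw [hθ, hα, div_le_div_iff₀ hcpos (by linarith : (0:ℝ) < 2 * a)]
    have key : 2 * a^2 - (d - c) * c ≤ c * s := by
      rcases le_or_gt (2 * a^2 - (d - c) * c) 0 with h | h
      · exact h.trans (mul_nonneg hcpos.le hsnn)
      · have h2 : (2 * a^2 - (d - c) * c)^2 ≤ (c * s)^2 := by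
          rw [mul_pow, hssq]
          nlinarith [mul_le_mul_of_nonneg_left hCS (sq_nonneg a)]
        nlinarith [mul_nonneg hcpos.le hsnn]
    nlinarith [key]
  have hαθt : α ≤ θt := by
    rw [hθt, hα, div_le_div_iff₀ (by linarith : (0:ℝ) < 2 * a) hapos]
    have key : s ≤ d + c := by
      have hle : s^2 ≤ (d + c)^2 := by rw [hssq]; nlinarith [hCS]
      nlinarith [hle, hsnn, hcpos, hdnn]
    nlinarith [key, hapos]
  exact ⟨⟨hθa, hθα, hαθt, hθtn⟩, ⟨by linarith, by linarith⟩, ⟨by linarith, by linarith⟩⟩
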